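/- Let T be an irreducible n×n real matrix satisfying condition T2 (null(Tᵀ) = span(v), null(T) = span(w) with v, w > 0 componentwise, and T + D is an M-matrix for every diagonal D ≥ O, D ≠ O), and let b ∈ ℝⁿ satisfy vᵀb ≤ 0. Consider the iteration P⁰ = O, (I − Pᵏ + T·Pᵏ)·x^{k+1} = b, Pᵏ = P(xᵏ). Then at every step k with Pᵏ ≠ I, either the exit condition (P^{k+1} − Pᵏ)·x^{k+1} = 0 holds (so x^{k+1} solves the piecewise linear system), or P^{k+1} ≠ I; consequently the matrix I − Pᵏ + T·Pᵏ is an M-matrix at every step and the iteration is well defined until convergence. -/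

import Mathlib

open Matrix

/-- Spectral radius of a real matrix: supremum of absolute values of its complex eigenvalues. -/
noncomputable def specRad {n : ℕ} (B : Matrix (Fin n) (Fin n) ℝ) : ℝ :=
  sSup {r : ℝ | ∃ μ ∈ spectrum ℂ (B.map (fun a => (a : ℂ))), r = ‖μ‖}

/-- `T` is an M-matrix: `T = α•I - B` with `B ≥ O` entrywise and `ρ(B) < α`. -/
def IsMmat {n : ℕ} (T : Matrix (Fin n) (Fin n) ℝ) : Prop :=
  ∃ (α : ℝ) (B : Matrix (Fin n) (Fin n) ℝ),
    (∀ i j, 0 ≤ B i j) ∧ specRad B < α ∧ T = α • (1 : Matrix (Fin n) (Fin n) ℝ) - B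

/-- `P(x)`: diagonal matrix with i-th entry `1` if `x i ≥ 0`, else `0`. -/
noncomputable def Pmat {n : ℕ} (x : Fin n → ℝ) : Matrix (Fin n) (Fin n) ℝ :=
  Matrix.diagonal fun i => if 0 ≤ x i then 1 else 0

/-- Irreducibility of a matrix (strong connectivity of its directed graph). -/
def IsIrred {n : ℕ} (T : Matrix (Fin n) (Fin n) ℝ) : Prop :=
  ∀ S : Finset (Fin n), S.Nonempty → S ≠ Finset.univ → ∃ i ∈ S, ∃ j ∉ S, T i j ≠ 0

/-- Condition T2: `T` is irreducible, `null(Tᵀ) = span(v)`, `null(T) = span(w)` with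
`v, w > 0` componentwise, and `T + D` is an M-matrix for every diagonal `D ≥ O`, `D ≠ O`. -/
def CondT2 {n : ℕ} (T : Matrix (Fin n) (Fin n) ℝ) (v w : Fin n → ℝ) : Prop :=
  IsIrred T ∧ (∀ i, 0 < v i) ∧ (∀ i, 0 < w i) ∧
  LinearMap.ker (Matrix.mulVecLin Tᵀ) = Submodule.span ℝ {v} ∧
  LinearMap.ker (Matrix.mulVecLin T) = Submodule.span ℝ {w} ∧
  (∀ d : Fin n → ℝ, (∀ i, 0 ≤ d i) → d ≠ 0 → IsMmat (T + Matrix.diagonal d))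

lemma exists_eigvec {n : ℕ} (M : Matrix (Fin n) (Fin n) ℂ) (μ : ℂ)
    (hμ : μ ∈ spectrum ℂ M) : ∃ z : Fin n → ℂ, z ≠ 0 ∧ M *ᵥ z = μ • z := by
  rw [spectrum.mem_iff] at hμ
  rw [Matrix.isUnit_iff_isUnit_det, isUnit_iff_ne_zero, not_not] at hμ
  obtain ⟨z, hz, hzz⟩ := Matrix.exists_mulVec_eq_zero_iff.mpr hμ
  refine ⟨z, hz, ?_⟩
  have := hzz
  rw [Algebra.algebraMap_eq_smul_one, Matrix.sub_mulVec, Matrix.smul_mulVec,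
    Matrix.one_mulVec, sub_eq_zero] at this
  exact this.symm

lemma specbound {n : ℕ} (B : Matrix (Fin n) (Fin n) ℝ) (hB : ∀ i j, 0 ≤ B i j)
    (u : Fin n → ℝ) (hu : ∀ i, 0 < u i) (α : ℝ)
    (hle : ∀ i, (B *ᵥ u) i ≤ α * u i)
    (hQ : ∀ Q : Finset (Fin n),
        (∀ i ∈ Q, (B *ᵥ u) i = α * u i ∧ ∀ j, B i j ≠ 0 → j ∈ Q) → Q = ∅)
    (μ : ℂ) (z : Fin n → ℂ) (hz : z ≠ 0)
    (heig : (B.map (fun a => (a : ℂ))) *ᵥ z = μ • z) :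
    ‖μ‖ < α := by
  set a : Fin n → ℝ := fun i => ‖z i‖ with ha
  have hn : (0 : ℕ) < n := by
    rcases Nat.eq_zero_or_pos n with h | h
    · exfalso; apply hz; funext i; exact absurd i.2 (by omega)
    · exact h
  obtain ⟨i₀, -, hi₀⟩ := Finset.exists_max_image Finset.univ (fun i => a i / u i)
    ⟨⟨0, hn⟩, Finset.mem_univ _⟩
  set m : ℝ := a i₀ / u i₀ with hm
  have hmax : ∀ j, a j ≤ m * u j := by
    intro j
    have := hi₀ j (Finset.mem_univ _)
    rwa [div_le_iff₀ (hu j)] at this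
  have hm0 : 0 < m := by
    obtain ⟨j, hj⟩ := Function.ne_iff.mp hz
    have haj : 0 < a j := by simpa [ha] using (norm_pos_iff.mpr hj)
    have := hmax j
    nlinarith [hu j]
  have hai₀ : a i₀ = m * u i₀ := by
    rw [hm, div_mul_cancel₀ _ (hu i₀).ne']
  have absum : ∀ i, ‖μ‖ * a i ≤ ∑ j, B i j * a j := by
    intro i
    have h1 : μ * z i = ∑ j, (B i j : ℂ) * z j := by
      have := congrFun heig i
      simp only [Matrix.mulVec, dotProduct, Matrix.map_apply, Pi.smul_apply,
        smul_eq_mul] at this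
      exact this.symm
    calc ‖μ‖ * a i = ‖μ * z i‖ := by
          rw [ha]; exact (norm_mul μ (z i)).symm
    _ = ‖∑ j, (B i j : ℂ) * z j‖ := by rw [h1]
    _ ≤ ∑ j, ‖(B i j : ℂ) * z j‖ := norm_sum_le _ _
    _ = ∑ j, B i j * a j := by
        apply Finset.sum_congr rfl; intro j _
        rw [norm_mul, Complex.norm_real, Real.norm_eq_abs, abs_of_nonneg (hB i j)]
  have sumle : ∀ i, ∑ j, B i j * a j ≤ ∑ j, B i j * (m * u j) := by
    intro i
    apply Finset.sum_le_sum; intro j _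
    exact mul_le_mul_of_nonneg_left (hmax j) (hB i j)
  have sumup : ∀ i, ∑ j, B i j * (m * u j) = m * (B *ᵥ u) i := by
    intro i
    simp only [Matrix.mulVec, dotProduct, Finset.mul_sum]
    apply Finset.sum_congr rfl; intro j _; ring
  have key : ∀ i, ‖μ‖ * a i ≤ m * (B *ᵥ u) i := by
    intro i
    calc ‖μ‖ * a i ≤ ∑ j, B i j * a j := absum i
    _ ≤ ∑ j, B i j * (m * u j) := sumle i
    _ = m * (B *ᵥ u) i := sumup i
  have hle' : ‖μ‖ ≤ α := by
    have := (key i₀).trans (mul_le_mul_of_nonneg_left (hle i₀) hm0.le)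
    rw [hai₀] at this
    have hpos : 0 < m * u i₀ := mul_pos hm0 (hu i₀)
    nlinarith
  rcases lt_or_eq_of_le hle' with h | h
  · exact h
  exfalso
  set Q : Finset (Fin n) := Finset.univ.filter (fun i => m * u i ≤ a i) with hQdef
  have hiQ : i₀ ∈ Q := by
    rw [hQdef, Finset.mem_filter]; exact ⟨Finset.mem_univ _, hai₀.ge⟩
  have : Q = ∅ := by
    apply hQ
    intro i hi
    rw [hQdef, Finset.mem_filter] at hi
    have haim : a i = m * u i := le_antisymm (hmax i) hi.2
    have e2 : ‖μ‖ * a i ≤ m * (B *ᵥ u) i := key i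
    have e3 : m * (B *ᵥ u) i ≤ m * (α * u i) := mul_le_mul_of_nonneg_left (hle i) hm0.le
    have e1 : ‖μ‖ * a i = m * (α * u i) := by rw [← h, haim]; ring
    have e4 : m * (B *ᵥ u) i = m * (α * u i) := le_antisymm e3 (e1 ▸ e2)
    have eBu : (B *ᵥ u) i = α * u i := mul_left_cancel₀ hm0.ne' e4
    refine ⟨eBu, ?_⟩
    have s1 : ∑ j, B i j * a j = ∑ j, B i j * (m * u j) := by
      have h5 : ∑ j, B i j * (m * u j) = ‖μ‖ * a i := by
        rw [sumup i, eBu, e1]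
      have := absum i
      linarith [sumle i]
    have termeq : ∀ j ∈ Finset.univ, B i j * a j = B i j * (m * u j) :=
      (Finset.sum_eq_sum_iff_of_le (fun j _ => mul_le_mul_of_nonneg_left (hmax j) (hB i j))).mp s1
    intro j hBij
    rw [hQdef, Finset.mem_filter]
    refine ⟨Finset.mem_univ _, ?_⟩
    have := termeq j (Finset.mem_univ _)
    have hBpos : 0 < B i j := lt_of_le_of_ne (hB i j) (Ne.symm hBij)
    exact (mul_left_cancel₀ hBpos.ne' this).ge
  rw [this] at hiQ; exact absurd hiQ (Finset.notMem_empty _)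

lemma specRad_lt {n : ℕ} (B : Matrix (Fin n) (Fin n) ℝ) (hB : ∀ i j, 0 ≤ B i j)
    (u : Fin n → ℝ) (hu : ∀ i, 0 < u i) (α : ℝ) (hα : 0 < α)
    (hle : ∀ i, (B *ᵥ u) i ≤ α * u i)
    (hQ : ∀ Q : Finset (Fin n),
        (∀ i ∈ Q, (B *ᵥ u) i = α * u i ∧ ∀ j, B i j ≠ 0 → j ∈ Q) → Q = ∅) :
    specRad B < α := by
  set M := B.map (fun a => (a : ℂ)) with hM
  set Sset := {r : ℝ | ∃ μ ∈ spectrum ℂ M, r = ‖μ‖} with hS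
  have hsub : Sset ⊆ (fun μ : ℂ => ‖μ‖) '' spectrum ℂ M := by
    rintro r ⟨μ, hμ, rfl⟩; exact ⟨μ, hμ, rfl⟩
  have hfin : Sset.Finite := (M.finite_spectrum.image _).subset hsub
  have hlt : ∀ r ∈ Sset, r < α := by
    rintro r ⟨μ, hμ, rfl⟩
    obtain ⟨z, hz, heig⟩ := exists_eigvec M μ hμ
    exact specbound B hB u hu α hle hQ μ z hz heig
  rcases Set.eq_empty_or_nonempty Sset with h | h
  · rw [specRad, ← hS, h, Real.sSup_empty]; exact hα
  · have := Set.Nonempty.csSup_mem h hfin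
    rw [specRad, ← hS]
    exact hlt _ this

lemma Aapply {n : ℕ} (T : Matrix (Fin n) (Fin n) ℝ) (c x : Fin n → ℝ) (i : Fin n) :
    ((1 - Matrix.diagonal c + T * Matrix.diagonal c) *ᵥ x) i
      = (1 - c i) * x i + ∑ j, T i j * (c j * x j) := by
  rw [Matrix.add_mulVec, Matrix.sub_mulVec, Matrix.one_mulVec, ← Matrix.mulVec_mulVec]
  have h1 : (Matrix.diagonal c *ᵥ x) i = c i * x i := Matrix.mulVec_diagonal c x i
  have h2 : (T *ᵥ (Matrix.diagonal c *ᵥ x)) i = ∑ j, T i j * (c j * x j) := by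
    have hd : (Matrix.diagonal c *ᵥ x) = fun j => c j * x j :=
      funext fun j => Matrix.mulVec_diagonal c x j
    rw [hd]
    simp only [Matrix.mulVec, dotProduct]
  rw [Pi.add_apply, Pi.sub_apply, h1, h2]; ring

lemma Aentry {n : ℕ} (T : Matrix (Fin n) (Fin n) ℝ) (c : Fin n → ℝ) (i j : Fin n) :
    (1 - Matrix.diagonal c + T * Matrix.diagonal c) i j
      = (if i = j then 1 - c i else 0) + T i j * c j := by
  by_cases h : i = j <;>
    simp [Matrix.add_apply, Matrix.sub_apply, Matrix.one_apply, Matrix.diagonal_apply,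
      Matrix.mul_diagonal, h]

lemma keyM {n : ℕ} (hn : 0 < n) (T : Matrix (Fin n) (Fin n) ℝ) (v w : Fin n → ℝ)
    (hT : CondT2 T v w) (c : Fin n → ℝ) (hc : ∀ i, c i = 0 ∨ c i = 1)
    (hc0 : ∃ i, c i = 0) :
    IsMmat (1 - Matrix.diagonal c + T * Matrix.diagonal c) ∧
      (1 - Matrix.diagonal c + T * Matrix.diagonal c).det ≠ 0 := by
  obtain ⟨hirr, hv, hw, hkv, hkw, hMm⟩ := hT
  set A := 1 - Matrix.diagonal c + T * Matrix.diagonal c with hAdef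
  -- T *ᵥ w = 0
  have hTw : ∀ i, ∑ j, T i j * w j = 0 := by
    have hmem : w ∈ LinearMap.ker (Matrix.mulVecLin T) :=
      hkw ▸ Submodule.mem_span_singleton_self w
    rw [LinearMap.mem_ker] at hmem
    intro i
    have := congrFun (by simpa [Matrix.mulVecLin_apply] using hmem : T *ᵥ w = 0) i
    simpa [Matrix.mulVec, dotProduct] using this
  -- off-diagonal entries of T are nonpositive
  have hoff : ∀ i j, i ≠ j → T i j ≤ 0 := by
    obtain ⟨α₀, B₀, hB₀, -, hEq⟩ := hMm (fun _ => 1) (fun _ => zero_le_one)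
      (Function.ne_iff.mpr ⟨⟨0, hn⟩, one_ne_zero⟩)
    intro i j hij
    have := congrFun (congrFun hEq i) j
    simp [Matrix.add_apply, Matrix.diagonal_apply, Matrix.one_apply, hij,
      Matrix.smul_apply, Matrix.sub_apply] at this
    linarith [hB₀ i j]
  -- constants
  set α : ℝ := 1 + ∑ i, |T i i| with hαdef
  have hsumTnn : (0:ℝ) ≤ ∑ i, |T i i| := Finset.sum_nonneg fun i _ => abs_nonneg _
  have hα : 0 < α := by positivity
  have hαdiag : ∀ i, 1 - c i + T i i * c i ≤ α := by
    intro i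
    have h1 : |T i i| ≤ ∑ k, |T k k| :=
      Finset.single_le_sum (fun k _ => abs_nonneg (T k k)) (Finset.mem_univ i)
    rcases hc i with h | h <;> rw [h] <;> simp <;> nlinarith [le_abs_self (T i i)]
  set t : ℝ := 1 + ∑ i, ∑ j, |T i j| * w j with htdef
  have htrow : ∀ i, ∑ j, |T i j| * w j ≤ t - 1 := by
    intro i
    have : ∑ j, |T i j| * w j ≤ ∑ k, ∑ j, |T k j| * w j :=
      Finset.single_le_sum
        (fun k _ => Finset.sum_nonneg fun j _ =>
          mul_nonneg (abs_nonneg _) (hw j).le) (Finset.mem_univ i)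
    rw [htdef]; linarith
  have ht : 1 ≤ t := by
    rw [htdef]
    have : (0:ℝ) ≤ ∑ i, ∑ j, |T i j| * w j :=
      Finset.sum_nonneg fun k _ => Finset.sum_nonneg fun j _ =>
        mul_nonneg (abs_nonneg _) (hw j).le
    linarith
  set u : Fin n → ℝ := fun i => w i + t * (1 - c i) with hudef
  have hu : ∀ i, 0 < u i := by
    intro i
    rcases hc i with h | h <;> rw [hudef] <;> simp only [h] <;> nlinarith [hw i]
  have hcu : ∀ j, c j * u j = c j * w j := by
    intro j
    rcases hc j with h | h <;> rw [hudef] <;> simp [h]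
  -- formula for A *ᵥ u
  have hAu : ∀ i, (A *ᵥ u) i = (1 - c i) * u i + ∑ j, -(T i j * ((1 - c j) * w j)) := by
    intro i
    rw [hAdef, Aapply]
    congr 1
    have : ∀ j, T i j * (c j * u j) = T i j * w j - T i j * ((1 - c j) * w j) := by
      intro j; rw [hcu j]; ring
    rw [Finset.sum_congr rfl (fun j _ => this j), Finset.sum_sub_distrib, hTw i]
    simp
  have hA0 : ∀ i, c i = 0 → 0 < (A *ᵥ u) i := by
    intro i h
    rw [hAu i]
    have h1 : ∑ j, -(T i j * ((1 - c j) * w j)) ≥ -(t-1) := by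
      have : ∀ j, -(|T i j| * w j) ≤ -(T i j * ((1 - c j) * w j)) := by
        intro j
        rcases hc j with hj | hj <;> rw [hj] <;> simp <;>
          nlinarith [le_abs_self (T i j), neg_abs_le (T i j), (hw j).le, abs_nonneg (T i j)]
      calc -(t-1) ≤ -∑ j, |T i j| * w j := by linarith [htrow i]
      _ = ∑ j, -(|T i j| * w j) := by rw [Finset.sum_neg_distrib]
      _ ≤ ∑ j, -(T i j * ((1 - c j) * w j)) := Finset.sum_le_sum fun j _ => this j
    have h2 : (1 - c i) * u i = w i + t := by simp only [hudef, h]; ring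
    nlinarith [hw i]
  have htermnn : ∀ i, c i = 1 → ∀ j, 0 ≤ -(T i j * ((1 - c j) * w j)) := by
    intro i h j
    rcases hc j with hj | hj
    · rcases eq_or_ne i j with rfl | hij
      · rw [h] at hj; norm_num at hj
      · rw [hj]; simp; nlinarith [hoff i j hij, hw j]
    · rw [hj]; simp
  have hA1 : ∀ i, c i = 1 → 0 ≤ (A *ᵥ u) i := by
    intro i h
    rw [hAu i, h]
    simp only [sub_self, zero_mul, zero_add]
    exact Finset.sum_nonneg fun j _ => htermnn i h j
  have hAnn : ∀ i, 0 ≤ (A *ᵥ u) i := by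
    intro i; rcases hc i with h | h
    · exact (hA0 i h).le
    · exact hA1 i h
  have hA1zero : ∀ i, c i = 1 → (A *ᵥ u) i = 0 → ∀ j, c j = 0 → T i j = 0 := by
    intro i h hz j hj
    rw [hAu i, h] at hz
    simp only [sub_self, zero_mul, zero_add] at hz
    have := (Finset.sum_eq_zero_iff_of_nonneg (fun j _ => htermnn i h j)).mp hz j
      (Finset.mem_univ j)
    rw [hj] at this
    simp at this
    rcases this with h' | h'
    · exact h'
    · exact absurd h' (hw j).ne'
  -- the matrix B
  set B : Matrix (Fin n) (Fin n) ℝ := α • 1 - A with hBdef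
  have hBent : ∀ i j, B i j = (if i = j then α - (1 - c i + T i i * c i) else -(T i j * c j)) := by
    intro i j
    rw [hBdef, Matrix.sub_apply, Matrix.smul_apply, hAdef, Aentry]
    by_cases h : i = j
    · subst h; simp only [eq_self_iff_true, if_true, Matrix.one_apply_eq, smul_eq_mul]; ring
    · simp [Matrix.one_apply, h]
  have hBnn : ∀ i j, 0 ≤ B i j := by
    intro i j
    rw [hBent]
    by_cases h : i = j
    · simp [h]; linarith [hαdiag j, h ▸ hαdiag i]
    · simp [h]
      rcases hc j with hj | hj
      · rw [hj]; simp
      · rw [hj]; simp; exact hoff i j h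
  have hBu : ∀ i, (B *ᵥ u) i = α * u i - (A *ᵥ u) i := by
    intro i
    rw [hBdef, Matrix.sub_mulVec, Matrix.smul_mulVec, Matrix.one_mulVec]
    simp
  have hle : ∀ i, (B *ᵥ u) i ≤ α * u i := by
    intro i; rw [hBu i]; linarith [hAnn i]
  have hQ : ∀ Q : Finset (Fin n),
      (∀ i ∈ Q, (B *ᵥ u) i = α * u i ∧ ∀ j, B i j ≠ 0 → j ∈ Q) → Q = ∅ := by
    intro Q hQprop
    by_contra hne
    have hQne : Q.Nonempty := Finset.nonempty_iff_ne_empty.mpr hne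
    have hAuzero : ∀ i ∈ Q, (A *ᵥ u) i = 0 := by
      intro i hi
      have := (hQprop i hi).1
      rw [hBu i] at this
      linarith
    obtain ⟨i0, hi0⟩ := hc0
    have hi0Q : i0 ∉ Q := by
      intro hmem
      exact absurd (hAuzero i0 hmem) (hA0 i0 hi0).ne'
    have hQuniv : Q ≠ Finset.univ := by
      intro h; rw [h] at hi0Q; exact hi0Q (Finset.mem_univ _)
    obtain ⟨i, hiQ, j, hjQ, hTij⟩ := hirr Q hQne hQuniv
    have hci : c i = 1 := by
      rcases hc i with h | h
      · exact absurd (hAuzero i hiQ) (hA0 i h).ne'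
      · exact h
    have hcj : c j = 1 := by
      rcases hc j with h | h
      · exact absurd (hA1zero i hci (hAuzero i hiQ) j h) hTij
      · exact h
    have hij : i ≠ j := fun h => hjQ (h ▸ hiQ)
    have hBij : B i j ≠ 0 := by
      rw [hBent, if_neg hij, hcj]
      simpa using hTij
    exact hjQ ((hQprop i hiQ).2 j hBij)
  have hspec : specRad B < α := specRad_lt B hBnn u hu α hα hle hQ
  constructor
  · exact ⟨α, B, hBnn, hspec, by rw [hBdef, sub_sub_cancel]⟩
  · intro hdet
    obtain ⟨z, hz0, hAz⟩ := Matrix.exists_mulVec_eq_zero_iff.mpr hdet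
    have hBz : ∀ i, (B *ᵥ z) i = α * z i := by
      intro i
      rw [hBdef, Matrix.sub_mulVec, Matrix.smul_mulVec, Matrix.one_mulVec, hAz]
      simp
    set zc : Fin n → ℂ := fun i => (z i : ℂ) with hzc
    have hzc0 : zc ≠ 0 := by
      obtain ⟨i, hi⟩ := Function.ne_iff.mp hz0
      exact Function.ne_iff.mpr ⟨i, by simpa [hzc] using hi⟩
    have heig : (B.map (fun a => (a : ℂ))) *ᵥ zc = ((α : ℂ)) • zc := by
      funext i
      have hsum : ∑ j, B i j * z j = α * z i := by
        simpa [Matrix.mulVec, dotProduct] using hBz i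
      simp only [Matrix.mulVec, dotProduct, Matrix.map_apply, Pi.smul_apply,
        smul_eq_mul, hzc]
      exact_mod_cast congrArg (fun r : ℝ => (r : ℂ)) hsum
    have := specbound B hBnn u hu α hle hQ (α : ℂ) zc hzc0 heig
    rw [Complex.norm_real, Real.norm_eq_abs, abs_of_pos hα] at this
    exact lt_irrefl _ this

lemma vlem {n : ℕ} (T : Matrix (Fin n) (Fin n) ℝ) (v : Fin n → ℝ) (hv : ∀ i, 0 < v i)
    (hvT : ∀ j, ∑ i, v i * T i j = 0) (b : Fin n → ℝ) (hvb : v ⬝ᵥ b ≤ 0)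
    (c x : Fin n → ℝ) (hc : ∀ i, c i = 0 ∨ c i = 1)
    (hx : (1 - Matrix.diagonal c + T * Matrix.diagonal c) *ᵥ x = b)
    (hxnn : ∀ i, 0 ≤ x i) :
    ∀ i, (1 - c i) * x i = 0 := by
  have hb : v ⬝ᵥ b = ∑ i, v i * ((1 - c i) * x i)
      + ∑ i, v i * (∑ j, T i j * (c j * x j)) := by
    rw [← hx]
    simp only [dotProduct]
    rw [← Finset.sum_add_distrib]
    apply Finset.sum_congr rfl; intro i _
    rw [Aapply]; ring
  have hzero : ∑ i, v i * (∑ j, T i j * (c j * x j)) = 0 := by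
    calc ∑ i, v i * (∑ j, T i j * (c j * x j))
        = ∑ i, ∑ j, v i * (T i j * (c j * x j)) := by
          apply Finset.sum_congr rfl; intro i _; rw [Finset.mul_sum]
    _ = ∑ j, ∑ i, v i * (T i j * (c j * x j)) := Finset.sum_comm
    _ = ∑ j, (∑ i, v i * T i j) * (c j * x j) := by
          apply Finset.sum_congr rfl; intro j _
          rw [Finset.sum_mul]
          apply Finset.sum_congr rfl; intro i _; ring
    _ = 0 := by simp [hvT]
  have hnn : ∀ i ∈ Finset.univ, 0 ≤ v i * ((1 - c i) * x i) := by
    intro i _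
    have h1 : 0 ≤ 1 - c i := by rcases hc i with h | h <;> rw [h] <;> norm_num
    exact mul_nonneg (hv i).le (mul_nonneg h1 (hxnn i))
  have hsum0 : ∑ i, v i * ((1 - c i) * x i) = 0 := by
    have hle : ∑ i, v i * ((1 - c i) * x i) ≤ 0 := by
      rw [hb, hzero] at hvb; linarith
    exact le_antisymm hle (Finset.sum_nonneg hnn)
  intro i
  have := (Finset.sum_eq_zero_iff_of_nonneg hnn).mp hsum0 i (Finset.mem_univ i)
  rcases mul_eq_zero.mp this with h | h
  · exact absurd h (hv i).ne'
  · exact h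

open Classical in
noncomputable def iterAux {n : ℕ} (T : Matrix (Fin n) (Fin n) ℝ) (b : Fin n → ℝ) :
    ℕ → (Fin n → ℝ) × (Fin n → ℝ)
  | 0 => (fun _ => (-1 : ℝ), b)
  | (k+1) =>
    let p := iterAux T b k
    (p.2,
      if (Pmat p.2 - Pmat p.1) *ᵥ p.2 = 0 then p.2
      else (1 - Pmat p.2 + T * Pmat p.2)⁻¹ *ᵥ b)

lemma Pmat_eq_one_iff {n : ℕ} (y : Fin n → ℝ) : Pmat y = 1 ↔ ∀ i, 0 ≤ y i := by
  constructor
  · intro h i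
    by_contra hi
    have := congrFun (congrFun h i) i
    rw [Pmat, Matrix.diagonal_apply_eq, Matrix.one_apply_eq, if_neg hi] at this
    norm_num at this
  · intro h
    rw [Pmat]
    have : (fun i => if 0 ≤ y i then (1:ℝ) else 0) = fun _ => 1 := by
      funext i; rw [if_pos (h i)]
    rw [this, Matrix.diagonal_one]

/-- If `T` is irreducible satisfying condition T2 and `vᵀb ≤ 0`, then the
iteration `P⁰ = O`, `(I − Pᵏ + T·Pᵏ)·x^{k+1} = b`, `Pᵏ = P(xᵏ)` is well defined until
convergence: there are iterates satisfying the recursion such that at every step `k` with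
`Pᵏ ≠ I` either the exit condition `(P^{k+1} − Pᵏ)·x^{k+1} = 0` holds (and then `x^{k+1}`
solves the piecewise linear system) or `P^{k+1} ≠ I`, and the matrix `I − Pᵏ + T·Pᵏ` is an
M-matrix at every step `k` before the exit condition occurs. -/
theorem stmt7 {n : ℕ} (T : Matrix (Fin n) (Fin n) ℝ) (v w : Fin n → ℝ)
    (hT : CondT2 T v w) (b : Fin n → ℝ) (hvb : v ⬝ᵥ b ≤ 0) :
    ∃ (x : ℕ → Fin n → ℝ) (P : ℕ → Matrix (Fin n) (Fin n) ℝ),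
      P 0 = 0 ∧ (∀ k, 1 ≤ k → P k = Pmat (x k)) ∧
      (∀ k, (1 - P k + T * P k) *ᵥ x (k + 1) = b) ∧
      (∀ k, P k ≠ 1 →
        ((P (k + 1) - P k) *ᵥ x (k + 1) = 0 ∧
           (1 - Pmat (x (k + 1)) + T * Pmat (x (k + 1))) *ᵥ x (k + 1) = b) ∨
        P (k + 1) ≠ 1) ∧
      (∀ k, (∀ j, j < k → (P (j + 1) - P j) *ᵥ x (j + 1) ≠ 0) →
        IsMmat (1 - P k + T * P k)) := by
  rcases Nat.eq_zero_or_pos n with hn | hn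
  · -- degenerate case n = 0
    subst hn
    have hall : ∀ (M N : Matrix (Fin 0) (Fin 0) ℝ), M = N :=
      fun M N => funext fun i => i.elim0
    have hallv : ∀ (a b' : Fin 0 → ℝ), a = b' := fun a b' => funext fun i => i.elim0
    refine ⟨fun _ _ => 0, fun _ => 0, rfl, ?_, ?_, ?_, ?_⟩
    · intro k _; exact hall _ _
    · intro k; exact hallv _ _
    · intro k hk; exact absurd (hall _ _) hk
    · intro k _
      refine ⟨1, 0, fun i j => le_refl 0, ?_, hall _ _⟩
      have hempty : {r : ℝ | ∃ μ ∈ spectrum ℂ ((0 : Matrix (Fin 0) (Fin 0) ℝ).map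
          (fun a => (a : ℂ))), r = ‖μ‖} = ∅ := by
        ext r
        simp only [Set.mem_setOf_eq, Set.mem_empty_iff_false, iff_false, not_exists]
        intro μ hμ
        rw [spectrum.mem_iff] at hμ
        exact hμ.1 (isUnit_of_subsingleton _)
      rw [specRad, hempty, Real.sSup_empty]
      norm_num
  -- main case
  obtain ⟨hirr, hv, hw, hkv, hkw, hMm⟩ := hT
  have hT' : CondT2 T v w := ⟨hirr, hv, hw, hkv, hkw, hMm⟩
  -- v is a null vector of Tᵀ
  have hvT : ∀ j, ∑ i, v i * T i j = 0 := by
    have hmem : v ∈ LinearMap.ker (Matrix.mulVecLin Tᵀ) :=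
      hkv ▸ Submodule.mem_span_singleton_self v
    rw [LinearMap.mem_ker] at hmem
    have h0 : v ᵥ* T = 0 := by simpa [Matrix.mulVecLin_apply] using hmem
    intro j
    have := congrFun h0 j
    simpa [Matrix.vecMul, dotProduct] using this
  set x : ℕ → Fin n → ℝ := fun k => (iterAux T b k).1 with hxdef
  set P : ℕ → Matrix (Fin n) (Fin n) ℝ := fun k => Pmat (x k) with hPdef
  set c : ℕ → Fin n → ℝ := fun k i => if 0 ≤ x k i then 1 else 0 with hcdef
  have hPc : ∀ k, P k = Matrix.diagonal (c k) := fun k => rfl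
  have hck : ∀ k i, c k i = 0 ∨ c k i = 1 := by
    intro k i; rw [hcdef]; dsimp only
    by_cases h : 0 ≤ x k i
    · right; rw [if_pos h]
    · left; rw [if_neg h]
  have hx1 : ∀ k, x (k + 1) = (iterAux T b k).2 := fun k => rfl
  have hpair : ∀ k, iterAux T b (k+1) = ((iterAux T b k).2,
      if (Pmat (iterAux T b k).2 - Pmat (iterAux T b k).1) *ᵥ (iterAux T b k).2 = 0
      then (iterAux T b k).2
      else (1 - Pmat (iterAux T b k).2 + T * Pmat (iterAux T b k).2)⁻¹ *ᵥ b) :=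
    fun k => rfl
  have hP0 : P 0 = 0 := by
    rw [hPdef]
    show Pmat (x 0) = 0
    have hx0 : x 0 = fun _ => (-1 : ℝ) := rfl
    rw [hx0, Pmat]
    have : (fun i : Fin n => if (0:ℝ) ≤ -1 then (1:ℝ) else 0) = fun _ => 0 := by
      funext i; rw [if_neg (by norm_num)]
    rw [this, Matrix.diagonal_zero]
  -- exit condition at step k
  set Ex : ℕ → Prop := fun k => (P (k + 1) - P k) *ᵥ x (k + 1) = 0 with hExdef
  have hstepPos : ∀ k, Ex k → x (k + 2) = x (k + 1) := by
    intro k hEx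
    show (iterAux T b (k+1+1)).1 = x (k+1)
    rw [hpair (k+1)]
    show (if _ then _ else _) = x (k+1)
    rw [if_pos]
    · rfl
    · exact hEx
  have hstepNeg : ∀ k, ¬ Ex k → x (k + 2) = (1 - P (k+1) + T * P (k+1))⁻¹ *ᵥ b := by
    intro k hEx
    show (iterAux T b (k+1+1)).1 = _
    rw [hpair (k+1)]
    show (if _ then _ else _) = _
    rw [if_neg]
    · rfl
    · exact hEx
  -- the v-argument
  have hS1 : ∀ k, (1 - P k + T * P k) *ᵥ x (k + 1) = b → P (k + 1) = 1 → Ex k := by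
    intro k heq h1
    have hxnn : ∀ i, 0 ≤ x (k+1) i := (Pmat_eq_one_iff _).mp h1
    have hzz := vlem T v hv hvT b hvb (c k) (x (k+1)) (hck k)
      (by rw [← hPc k]; exact heq) hxnn
    rw [hExdef]
    show (P (k+1) - P k) *ᵥ x (k+1) = 0
    funext i
    rw [h1, hPc k]
    simp only [Matrix.sub_mulVec, Matrix.one_mulVec, Pi.sub_apply,
      Matrix.mulVec_diagonal, Pi.zero_apply]
    have := hzz i
    nlinarith [hzz i]
  -- the shift identity
  have hshift : ∀ k, (1 - P k + T * P k) *ᵥ x (k + 1) = b → Ex k →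
      (1 - P (k+1) + T * P (k+1)) *ᵥ x (k + 1) = b := by
    intro k heq hEx
    have hM : 1 - P (k+1) + T * P (k+1)
        = (1 - P k + T * P k) + (T * (P (k+1) - P k) - (P (k+1) - P k)) := by
      noncomm_ring
    rw [hM, Matrix.add_mulVec, heq, Matrix.sub_mulVec, ← Matrix.mulVec_mulVec, hEx,
      Matrix.mulVec_zero]
    simp
  -- the recursion equation holds at every step
  have heqs : ∀ k, (1 - P k + T * P k) *ᵥ x (k + 1) = b ∧
      (¬ Ex k → P (k+1) ≠ 1) := by
    intro k
    induction k with
    | zero =>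
      constructor
      · rw [hP0]
        have : x 1 = b := rfl
        simp [this]
      · intro hEx h1
        exact hEx (hS1 0 (by rw [hP0]; have : x 1 = b := rfl; simp [this]) h1)
    | succ k ih =>
      obtain ⟨ihEq, ihN1⟩ := ih
      have main : (1 - P (k+1) + T * P (k+1)) *ᵥ x (k + 2) = b := by
        by_cases hEx : Ex k
        · rw [hstepPos k hEx]
          exact hshift k ihEq hEx
        · have hP1 : P (k+1) ≠ 1 := ihN1 hEx
          have hc0 : ∃ i, c (k+1) i = 0 := by
            by_contra hno
            push_neg at hno
            apply hP1
            rw [hPdef]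
            apply (Pmat_eq_one_iff _).mpr
            intro i
            rcases hck (k+1) i with h | h
            · exact absurd h (hno i)
            · by_contra hneg
              rw [hcdef] at h
              simp only at h
              rw [if_neg hneg] at h
              norm_num at h
          have hdet := (keyM hn T v w hT' (c (k+1)) (hck (k+1)) hc0).2
          rw [hstepNeg k hEx, hPc (k+1)]
          rw [Matrix.mulVec_mulVec, Matrix.mul_nonsing_inv _ (isUnit_iff_ne_zero.mpr hdet),
            Matrix.one_mulVec]
      exact ⟨main, fun hEx h1 => hEx (hS1 (k+1) main h1)⟩
  -- P k ≠ 1 when no exit has occurred before step k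
  have hnot1 : ∀ k, (∀ j, j < k → ¬ Ex j) → P k ≠ 1 := by
    intro k hk
    cases k with
    | zero =>
      rw [hP0]
      intro h
      have := congrFun (congrFun h ⟨0, hn⟩) ⟨0, hn⟩
      rw [Matrix.zero_apply, Matrix.one_apply_eq] at this
      norm_num at this
    | succ k =>
      exact (heqs k).2 (hk k (Nat.lt_succ_self k))
  refine ⟨x, P, hP0, fun k _ => rfl, fun k => (heqs k).1, ?_, ?_⟩
  · intro k hk
    by_cases hEx : Ex k
    · left
      exact ⟨hEx, hshift k (heqs k).1 hEx⟩
    · right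
      exact (heqs k).2 hEx
  · intro k hk
    have hP1 : P k ≠ 1 := hnot1 k hk
    have hc0 : ∃ i, c k i = 0 := by
      by_contra hno
      push_neg at hno
      apply hP1
      rw [hPdef]
      apply (Pmat_eq_one_iff _).mpr
      intro i
      rcases hck k i with h | h
      · exact absurd h (hno i)
      · by_contra hneg
        rw [hcdef] at h
        simp only at h
        rw [if_neg hneg] at h
        norm_num at h
    rw [hPc k]
    exact (keyM hn T v w hT' (c k) (hck k) hc0).1
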